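/- Let T be an infinite tree without vertices of degree one, and let Γ be a group acting on T by tree automorphisms such that the induced action of Γ on ∂T (with the shadow topology) is minimal and Γ contains at least one hyperbolic element. Then the action of Γ on T is minimal. -/

import Mathlib

open Filter Set

section PowersDefs

/-- A Powers group: for every finite `F ⊆ Γ \ {1}` and every `N ≥ 1` there is a partition
`Γ = C ⊔ D` (here `D = Cᶜ`) and elements `g 1, …, g N` with `fC ∩ C = ∅` for `f ∈ F` and
`g j D ∩ g k D = ∅` for `j ≠ k`. -/
def IsPowersGroup (Γ : Type*) [Group Γ] : Prop :=
  Nontrivial Γ ∧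
    ∀ F : Finset Γ, (1 : Γ) ∉ F → ∀ N : ℕ, 1 ≤ N →
      ∃ (C : Set Γ) (g : Fin N → Γ),
        (∀ f ∈ F, (fun x => f * x) '' C ∩ C = ∅) ∧
        ∀ j k : Fin N, j ≠ k →
          (fun x => g j * x) '' Cᶜ ∩ (fun x => g k * x) '' Cᶜ = ∅

/-- A subgroup is subnormal if there is a finite chain of successively normal subgroups
reaching the whole group. -/
def IsSubnormalIn {Γ : Type*} [Group Γ] (N : Subgroup Γ) : Prop :=
  ∃ (k : ℕ) (c : ℕ → Subgroup Γ), c 0 = N ∧ c k = ⊤ ∧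
    ∀ i < k, c i ≤ c (i + 1) ∧ ∀ x ∈ c (i + 1), ∀ y ∈ c i, x * y * x⁻¹ ∈ c i

/-- A strongly Powers group: every nontrivial subnormal subgroup is a Powers group. -/
def IsStronglyPowersGroup (Γ : Type*) [Group Γ] : Prop :=
  ∀ N : Subgroup Γ, IsSubnormalIn N → N ≠ ⊥ → IsPowersGroup N

end PowersDefs

section TreeDefs

variable {V : Type*}

/-- A ray in a graph: a sequence of vertices with `d(x m, x n) = |m - n|`. -/
def IsRay (G : SimpleGraph V) (x : ℕ → V) : Prop :=
  ∀ m n : ℕ, G.dist (x m) (x n) = ((m : ℤ) - (n : ℤ)).natAbs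

/-- Two rays are cofinal if up to an index shift they eventually coincide. -/
def Cofinal (x y : ℕ → V) : Prop :=
  ∃ a b : ℕ, ∀ᶠ n in atTop, y (n + a) = x (n + b)

/-- The type of rays of a graph. -/
def Ray (G : SimpleGraph V) : Type _ := {x : ℕ → V // IsRay G x}

/-- The boundary of a tree: cofinality classes of rays. -/
def Boundary (G : SimpleGraph V) : Type _ :=
  Quot (fun r s : Ray G => Cofinal r.1 s.1)

/-- The boundary point represented by a ray. -/
def Boundary.mk (G : SimpleGraph V) (r : Ray G) : Boundary G := Quot.mk _ r

/-- The shadow of the oriented edge `(u, v)`: boundary points represented by rays that are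
eventually strictly closer to `v` than to `u`. -/
def Shadow (G : SimpleGraph V) (u v : V) : Set (Boundary G) :=
  {ξ | ∃ r : Ray G, Boundary.mk G r = ξ ∧
    ∀ᶠ n in atTop, G.dist v (r.1 n) < G.dist u (r.1 n)}

/-- The shadow topology on the boundary of a tree. -/
instance (G : SimpleGraph V) : TopologicalSpace (Boundary G) :=
  TopologicalSpace.generateFrom {s | ∃ u v : V, G.Adj u v ∧ s = Shadow G u v}

/-- The action of `Γ` on the vertices is by graph automorphisms. -/
def IsGraphAction (G : SimpleGraph V) (Γ : Type*) [Group Γ] [MulAction Γ V] : Prop :=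
  ∀ (γ : Γ) (u v : V), G.Adj u v ↔ G.Adj (γ • u) (γ • v)

variable {Γ : Type*} [Group Γ] [MulAction Γ V]

theorem dist_smul_eq {G : SimpleGraph V} (h : IsGraphAction G Γ) (γ : Γ) (u v : V) :
    G.dist (γ • u) (γ • v) = G.dist u v := by
  have key : ∀ (g : Γ) (a b : V), G.dist (g • a) (g • b) ≤ G.dist a b := by
    intro g a b
    by_cases hr : G.Reachable a b
    · obtain ⟨w, hw⟩ := hr.exists_walk_length_eq_dist
      have hle : G.dist (g • a) (g • b) ≤
          (w.map ⟨fun x => g • x, fun hx => (h g _ _).mp hx⟩).length :=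
        SimpleGraph.dist_le _
      rwa [SimpleGraph.Walk.length_map, hw] at hle
    · have hr2 : ¬ G.Reachable (g • a) (g • b) := by
        intro hc
        refine hr ?_
        have h' := hc.map (⟨fun x => g⁻¹ • x, fun hx => (h g⁻¹ _ _).mp hx⟩ : G →g G)
        have h'' : G.Reachable (g⁻¹ • (g • a)) (g⁻¹ • (g • b)) := h'
        simpa using h''
      rw [SimpleGraph.dist_eq_zero_of_not_reachable hr,
        SimpleGraph.dist_eq_zero_of_not_reachable hr2]
  refine le_antisymm (key γ u v) ?_
  have h2 := key γ⁻¹ (γ • u) (γ • v)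
  simpa using h2

/-- The image of a ray under an automorphism. -/
def raySmul {G : SimpleGraph V} (h : IsGraphAction G Γ) (γ : Γ) (r : Ray G) : Ray G :=
  ⟨fun n => γ • r.1 n, fun m n => by rw [dist_smul_eq h]; exact r.2 m n⟩

/-- The induced action of an automorphism on the boundary. -/
def Boundary.smul {G : SimpleGraph V} (h : IsGraphAction G Γ) (γ : Γ) :
    Boundary G → Boundary G :=
  Quot.map (raySmul h γ) (by
    rintro r s ⟨a, b, hab⟩
    exact ⟨a, b, hab.mono fun n hn => by simp only [raySmul, hn]⟩)

/-- The fixed-point set of `γ` on the boundary. -/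
def FixedBoundary {G : SimpleGraph V} (h : IsGraphAction G Γ) (γ : Γ) :
    Set (Boundary G) :=
  {ξ | Boundary.smul h γ ξ = ξ}

/-- A slender action: every nontrivial element has a fixed-point set with empty interior in
the boundary. -/
def SlenderAction {G : SimpleGraph V} (h : IsGraphAction G Γ) : Prop :=
  ∀ γ : Γ, γ ≠ 1 → interior (FixedBoundary h γ) = ∅

/-- A minimal action on a tree: no nonempty proper invariant subtree. -/
def MinimalTreeAction (G : SimpleGraph V) (Γ : Type*) [Group Γ] [MulAction Γ V] : Prop :=
  ∀ S : Set V, S.Nonempty → (∀ (γ : Γ), ∀ v ∈ S, γ • v ∈ S) →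
    (G.induce S).Connected → S = Set.univ

/-- An inversion of a graph. -/
def IsInversionAut (G : SimpleGraph V) (γ : Γ) : Prop :=
  ∃ u v : V, G.Adj u v ∧ γ • u = v ∧ γ • v = u

/-- An elliptic automorphism: one fixing a vertex. -/
def IsEllipticAut (V : Type*) [MulAction Γ V] (γ : Γ) : Prop := ∃ v : V, γ • v = v

/-- A hyperbolic automorphism: neither elliptic nor an inversion. -/
def IsHyperbolicAut (G : SimpleGraph V) (γ : Γ) : Prop :=
  ¬ IsEllipticAut V γ ∧ ¬ IsInversionAut G γ

/-- The axis of an automorphism: the set of vertices minimizing the displacement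
`d(x, γ x)`. -/
def Axis (G : SimpleGraph V) (γ : Γ) : Set V :=
  {x : V | ∀ y : V, G.dist x (γ • x) ≤ G.dist y (γ • y)}

/-- Two automorphisms are transverse if the intersection of their axes is finite. -/
def Transverse (G : SimpleGraph V) (γ δ : Γ) : Prop :=
  (Axis G γ ∩ Axis G δ).Finite

/-- A strongly hyperbolic action on a tree: it admits a pair of transverse hyperbolic
elements. -/
def StronglyHyperbolicTreeAction (G : SimpleGraph V) (Γ : Type*) [Group Γ] [MulAction Γ V] :
    Prop :=
  ∃ γ δ : Γ, IsHyperbolicAut G γ ∧ IsHyperbolicAut G δ ∧ Transverse G γ δ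

/-- A pending ray: a ray whose vertices eventually all have degree two. -/
def IsPendingRay (G : SimpleGraph V) (x : ℕ → V) : Prop :=
  IsRay G x ∧ ∀ᶠ n in atTop, (G.neighborSet (x n)).ncard = 2

/-- A linear tree: its vertex set is an enumeration `(x n), n ∈ ℤ` with
`d(x m, x n) = |m - n|`. -/
def IsLinearTree (G : SimpleGraph V) : Prop :=
  ∃ x : ℤ → V, Function.Surjective x ∧
    ∀ m n : ℤ, G.dist (x m) (x n) = (m - n).natAbs

end TreeDefs


section Helpers

variable {V : Type*} {G : SimpleGraph V}

open SimpleGraph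

/-- Any path in a tree realizes the distance. -/
theorem tree_path_length (hT : G.IsTree) {a b : V} (p : G.Walk a b) (hp : p.IsPath) :
    p.length = G.dist a b := by
  haveI := Classical.decEq V
  obtain ⟨q, hq⟩ := (hT.isConnected a b).exists_walk_length_eq_dist
  have hbp : q.bypass.IsPath := q.bypass_isPath
  have hlen : q.bypass.length = G.dist a b :=
    le_antisymm (hq ▸ q.length_bypass_le) (SimpleGraph.dist_le _)
  have := (hT.existsUnique_path a b).unique hp hbp
  rw [this, hlen]

theorem walk_getVert_dist_le (hc : G.Connected) {a b : V} (p : G.Walk a b) (i j : ℕ)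
    (hij : i ≤ j) : G.dist (p.getVert i) (p.getVert j) ≤ j - i := by
  induction j with
  | zero => have : i = 0 := by omega
            subst this; simp
  | succ j ih =>
    rcases Nat.lt_or_ge i (j+1) with h | h
    · have hij' : i ≤ j := by omega
      rcases Nat.lt_or_ge j p.length with hj | hj
      · have hadj : G.Adj (p.getVert j) (p.getVert (j+1)) := p.adj_getVert_succ hj
        have h1 : G.dist (p.getVert j) (p.getVert (j+1)) ≤ 1 :=
          (SimpleGraph.dist_le (SimpleGraph.Walk.cons hadj SimpleGraph.Walk.nil))
        calc G.dist (p.getVert i) (p.getVert (j+1)) ≤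
            G.dist (p.getVert i) (p.getVert j) + G.dist (p.getVert j) (p.getVert (j+1)) :=
              hc.dist_triangle
          _ ≤ (j - i) + 1 := Nat.add_le_add (ih hij') h1
          _ ≤ (j+1) - i := by omega
      · have e1 : p.getVert (j+1) = p.getVert j := by
          rw [p.getVert_of_length_le (by omega : p.length ≤ j+1),
            p.getVert_of_length_le (by omega : p.length ≤ j)]
        rw [e1]
        exact le_trans (ih hij') (by omega)
    · have : i = j + 1 := by omega
      subst this
      simp

/-- Distances along a geodesic walk. -/
theorem geo_getVert_dist (hc : G.Connected) {a b : V} (p : G.Walk a b)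
    (hgeo : p.length = G.dist a b) {i j : ℕ} (hij : i ≤ j) (hj : j ≤ p.length) :
    G.dist (p.getVert i) (p.getVert j) = j - i := by
  have h1 : G.dist a (p.getVert i) ≤ i := by
    simpa using walk_getVert_dist_le hc p 0 i (Nat.zero_le i)
  have h2 : G.dist (p.getVert i) (p.getVert j) ≤ j - i := walk_getVert_dist_le hc p i j hij
  have h3 : G.dist (p.getVert j) b ≤ p.length - j := by
    have := walk_getVert_dist_le hc p j p.length hj
    rwa [p.getVert_length] at this
  have t1 : G.dist a b ≤ G.dist a (p.getVert i) + G.dist (p.getVert i) b := hc.dist_triangle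
  have t2 : G.dist (p.getVert i) b ≤ G.dist (p.getVert i) (p.getVert j) + G.dist (p.getVert j) b :=
    hc.dist_triangle
  omega

theorem isPath_concat {a b c : V} {p : G.Walk a b} (hp : p.IsPath) (h : G.Adj b c)
    (hc : c ∉ p.support) : (p.concat h).IsPath := by
  rw [← SimpleGraph.Walk.isPath_reverse_iff, SimpleGraph.Walk.reverse_concat]
  rw [SimpleGraph.Walk.cons_isPath_iff, SimpleGraph.Walk.isPath_reverse_iff,
    SimpleGraph.Walk.support_reverse]
  exact ⟨hp, by simpa using hc⟩

/-- A geodesic path between any two vertices of a connected graph. -/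
theorem exists_geo_path (hc : G.Connected) (a b : V) :
    ∃ p : G.Walk a b, p.IsPath ∧ p.length = G.dist a b := by
  haveI := Classical.decEq V
  obtain ⟨q, hq⟩ := (hc a b).exists_walk_length_eq_dist
  exact ⟨q.bypass, q.bypass_isPath,
    le_antisymm (hq ▸ q.length_bypass_le) (SimpleGraph.dist_le _)⟩

/-- In a tree, adjacent vertices have distances to `x` differing by exactly one. -/
theorem tree_adj_dist (hT : G.IsTree) {a b : V} (hab : G.Adj a b) (x : V) :
    G.dist x b = G.dist x a + 1 ∨ G.dist x b + 1 = G.dist x a := by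
  have hc := hT.isConnected
  obtain ⟨p, hp, hgeo⟩ := exists_geo_path hc x a
  by_cases hmem : b ∈ p.support
  · right
    obtain ⟨i, hi, hile⟩ := SimpleGraph.Walk.mem_support_iff_exists_getVert.mp hmem
    have hne : i ≠ p.length := by
      intro h; subst h; rw [p.getVert_length] at hi; exact hab.ne' (hi ▸ rfl)
    have hxb : G.dist x b = i := by
      have := geo_getVert_dist hc p hgeo (Nat.zero_le i) hile
      rw [p.getVert_zero, hi] at this
      omega
    have hib : G.dist b (p.getVert p.length) = p.length - i := by
      have := geo_getVert_dist hc p hgeo hile (le_refl p.length)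
      rw [hi] at this; exact this
    rw [p.getVert_length] at hib
    have h1 : G.dist b a = 1 := SimpleGraph.dist_eq_one_iff_adj.mpr hab.symm
    omega
  · left
    have := tree_path_length hT (p.concat hab) (isPath_concat hp hab hmem)
    rw [SimpleGraph.Walk.length_concat, hgeo] at this
    omega

/-- Unique gate: in a tree, a vertex has at most one neighbour strictly closer to `x`. -/
theorem tree_gate_unique (hT : G.IsTree) {x c a b : V} (hca : G.Adj c a) (hcb : G.Adj c b)
    (ha : G.dist x a + 1 = G.dist x c) (hb : G.dist x b + 1 = G.dist x c) : a = b := by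
  have hc := hT.isConnected
  have key : ∀ y : V, G.Adj c y → G.dist x y + 1 = G.dist x c →
      ∃ (p : G.Walk x c), p.IsPath ∧ p.getVert (G.dist x y) = y := by
    intro y hy hxy
    obtain ⟨q, hq, hqlen⟩ := exists_geo_path hc x y
    have hcnot : c ∉ q.support := by
      intro hmem
      obtain ⟨i, hi, hile⟩ := SimpleGraph.Walk.mem_support_iff_exists_getVert.mp hmem
      have := geo_getVert_dist hc q hqlen (Nat.zero_le i) hile
      rw [q.getVert_zero, hi] at this
      omega
    refine ⟨q.concat hy.symm, isPath_concat hq hy.symm hcnot, ?_⟩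
    rw [SimpleGraph.Walk.concat_eq_append, SimpleGraph.Walk.getVert_append]
    rw [hqlen]
    simp
  obtain ⟨pa, hpa, hga⟩ := key a hca ha
  obtain ⟨pb, hpb, hgb⟩ := key b hcb hb
  have hab2 : pa = pb := (hT.existsUnique_path x c).unique hpa hpb
  have hd : G.dist x a = G.dist x b := by omega
  rw [← hga, ← hgb, hab2, hd]

/-- A non-backtracking sequence in a tree is a geodesic ray. -/
theorem tree_noBacktrack_dist (hT : G.IsTree) (r : ℕ → V)
    (hadj : ∀ n, G.Adj (r n) (r (n+1))) (hnb : ∀ n, r (n+2) ≠ r n) :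
    ∀ m k : ℕ, G.dist (r m) (r (m + k)) = k := by
  intro m k
  induction k using Nat.strong_induction_on with
  | _ k ih =>
    match k with
    | 0 => simp
    | 1 => exact SimpleGraph.dist_eq_one_iff_adj.mpr (by simpa using hadj m)
    | (k+2) =>
      have ih1 : G.dist (r m) (r (m + (k+1))) = k + 1 := ih (k+1) (by omega)
      have ih0 : G.dist (r m) (r (m + k)) = k := ih k (by omega)
      have hadj' : G.Adj (r (m + (k+1))) (r (m + (k+2))) := by
        have := hadj (m + (k+1)); simpa [Nat.add_assoc] using this
      rcases tree_adj_dist hT hadj' (r m) with h | h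
      · rw [ih1] at h; omega
      · exfalso
        rw [ih1] at h
        have hadj'' : G.Adj (r (m + (k+1))) (r (m + k)) := by
          have := hadj (m + k); rw [show m + k + 1 = m + (k+1) by omega] at this
          exact this.symm
        have heq : r (m + (k+2)) = r (m + k) :=
          tree_gate_unique hT hadj' hadj'' (by omega) (by omega : G.dist (r m) (r (m+k)) + 1 = _)
        exact hnb (m + k) (by rw [show m + k + 2 = m + (k+2) by omega]; exact heq)

theorem tree_noBacktrack_isRay (hT : G.IsTree) (r : ℕ → V)
    (hadj : ∀ n, G.Adj (r n) (r (n+1))) (hnb : ∀ n, r (n+2) ≠ r n) :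
    IsRay G r := by
  intro a b
  rcases Nat.le_total a b with h | h
  · have hd := tree_noBacktrack_dist hT r hadj hnb a (b - a)
    rw [show a + (b - a) = b by omega] at hd
    rw [hd]; omega
  · have hd := tree_noBacktrack_dist hT r hadj hnb b (a - b)
    rw [show b + (a - b) = a by omega] at hd
    rw [SimpleGraph.dist_comm, hd]; omega

/-- In an infinite connected graph with no degree-one vertices, every vertex has a
neighbour different from any given vertex. -/
theorem pick_neighbor (hc : G.Connected) [Infinite V]
    (hdeg : ∀ v : V, (G.neighborSet v).ncard ≠ 1) (v u : V) :
    ∃ w, G.Adj v w ∧ w ≠ u := by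
  have hne : (G.neighborSet v).Nonempty := by
    obtain ⟨t, ht⟩ := exists_ne v
    obtain ⟨p⟩ := hc v t
    cases p with
    | nil => exact absurd rfl ht.symm
    | cons h q => exact ⟨_, h⟩
  by_contra hcon
  push_neg at hcon
  have hsub : G.neighborSet v = {u} := by
    apply Set.eq_singleton_iff_nonempty_unique_mem.mpr
    exact ⟨hne, fun w hw => hcon w hw⟩
  exact hdeg v (by rw [hsub]; simp)

/-- Between two vertices of a connected induced subgraph, THE path stays in the set. -/
theorem path_in_S (hT : G.IsTree) {S : Set V} (hSc : (G.induce S).Connected)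
    {a b : V} (ha : a ∈ S) (hb : b ∈ S) :
    ∃ p : G.Walk a b, p.IsPath ∧ p.length = G.dist a b ∧ ∀ x ∈ p.support, x ∈ S := by
  haveI := Classical.decEq V
  obtain ⟨w⟩ := hSc ⟨a, ha⟩ ⟨b, hb⟩
  let w' : G.Walk a b := w.map (SimpleGraph.Embedding.induce S).toHom
  have hsupp : ∀ x ∈ w'.support, x ∈ S := by
    intro x hx
    rw [show w'.support = _ from SimpleGraph.Walk.support_map _ _, List.mem_map] at hx
    obtain ⟨y, _, rfl⟩ := hx
    exact y.2
  refine ⟨w'.bypass, w'.bypass_isPath, ?_, ?_⟩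
  · exact tree_path_length hT _ w'.bypass_isPath
  · exact fun x hx => hsupp x (w'.support_bypass_subset hx)

/-- `Cofinal` is an equivalence relation on rays. -/
theorem cofinal_equivalence (G : SimpleGraph V) :
    Equivalence (fun r s : Ray G => Cofinal r.1 s.1) := by
  constructor
  · intro r
    exact ⟨0, 0, Filter.Eventually.of_forall fun n => rfl⟩
  · rintro r s ⟨a, b, hab⟩
    exact ⟨b, a, hab.mono fun n hn => hn.symm⟩
  · rintro r s t ⟨a, b, hab⟩ ⟨c, d, hcd⟩
    refine ⟨c + a, d + b, ?_⟩
    rw [Filter.eventually_atTop] at hab hcd ⊢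
    obtain ⟨N1, h1⟩ := hab
    obtain ⟨N2, h2⟩ := hcd
    refine ⟨N1 + N2, fun n hn => ?_⟩
    have e1 := h2 (n + a) (by omega)
    have e2 := h1 (n + d) (by omega)
    rw [show n + a + c = n + (c + a) by omega, show n + a + d = n + d + a by omega] at e1
    rw [show n + d + b = n + (d + b) by omega] at e2
    rw [e1, e2]

theorem boundary_mk_eq_iff {G : SimpleGraph V} {r s : Ray G} :
    Boundary.mk G r = Boundary.mk G s ↔ Cofinal r.1 s.1 := by
  rw [Boundary.mk, Boundary.mk]
  exact Quot.eq.trans (cofinal_equivalence G).eqvGen_iff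

theorem ev_shift_down {P : ℕ → Prop} {a : ℕ} (h : ∀ᶠ n in Filter.atTop, P (n + a)) :
    ∀ᶠ n in Filter.atTop, P n := by
  rw [Filter.eventually_atTop] at h ⊢
  obtain ⟨N, hN⟩ := h
  refine ⟨N + a, fun k hk => ?_⟩
  have := hN (k - a) (by omega)
  rwa [show k - a + a = k by omega] at this

theorem ev_shift_up {P : ℕ → Prop} {a : ℕ} (h : ∀ᶠ n in Filter.atTop, P n) :
    ∀ᶠ n in Filter.atTop, P (n + a) := by
  rw [Filter.eventually_atTop] at h ⊢
  obtain ⟨N, hN⟩ := h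
  exact ⟨N, fun n hn => hN (n + a) (by omega)⟩

/-- If the class of a ray lies in a shadow, the ray itself eventually satisfies the
shadow condition. -/
theorem ray_mem_shadow {G : SimpleGraph V} {r : Ray G} {u v : V}
    (h : Boundary.mk G r ∈ Shadow G u v) :
    ∀ᶠ n in Filter.atTop, G.dist v (r.1 n) < G.dist u (r.1 n) := by
  obtain ⟨r', hmk, hev⟩ := h
  obtain ⟨a, b, hab⟩ := boundary_mk_eq_iff.mp hmk
  have hev' : ∀ᶠ n in Filter.atTop,
      G.dist v (r'.1 (n + b)) < G.dist u (r'.1 (n + b)) := ev_shift_up hev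
  apply ev_shift_down (a := a)
  filter_upwards [hab, hev'] with n h1 h2
  rw [← h1] at h2
  exact h2

theorem shadow_isOpen {G : SimpleGraph V} {u v : V} (h : G.Adj u v) :
    IsOpen (Shadow G u v) :=
  TopologicalSpace.isOpen_generateFrom_of_mem ⟨u, v, h, rfl⟩

end Helpers

section Statements

variable {V : Type*}

theorem statement12 (G : SimpleGraph V) (hT : G.IsTree) [Infinite V]
    (hdeg : ∀ v : V, (G.neighborSet v).ncard ≠ 1)
    {Γ : Type*} [Group Γ] [MulAction Γ V]
    (hact : IsGraphAction G Γ)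
    (hbmin : ∀ C : Set (Boundary G), IsClosed C →
      (∀ γ : Γ, ∀ ξ ∈ C, Boundary.smul hact γ ξ ∈ C) →
      C = ∅ ∨ C = Set.univ)
    (hhyp : ∃ γ : Γ, IsHyperbolicAut G γ) :
    MinimalTreeAction G Γ := by
  intro S hSne hSinv hSconn
  have hc : G.Connected := hT.isConnected
  obtain ⟨γ, hγ⟩ := hhyp
  obtain ⟨s₀, hs₀⟩ := hSne
  -- minimal displacement over S
  set Dset : Set ℕ := {n | ∃ s ∈ S, G.dist s (γ • s) = n} with hDdef
  have hDne : Dset.Nonempty := ⟨G.dist s₀ (γ • s₀), s₀, hs₀, rfl⟩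
  obtain ⟨ℓ, hldef⟩ : ∃ ℓ : ℕ, ℓ = sInf Dset := ⟨_, rfl⟩
  obtain ⟨x, hxS, hxd⟩ : ∃ s ∈ S, G.dist s (γ • s) = ℓ := by
    rw [hldef]; exact Nat.sInf_mem hDne
  have hmin : ∀ y ∈ S, ℓ ≤ G.dist y (γ • y) := fun y hy => by
    rw [hldef]; exact Nat.sInf_le ⟨y, hy, rfl⟩
  have hlpos : 0 < ℓ := by
    rcases Nat.eq_zero_or_pos ℓ with h0 | h
    · exfalso
      rw [h0] at hxd
      have : x = γ • x := hc.dist_eq_zero_iff.mp hxd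
      exact hγ.1 ⟨x, this.symm⟩
    · exact h
  obtain ⟨P, hPpath, hPlen, hPsupp⟩ := path_in_S hT hSconn hxS (hSinv γ x hxS)
  have hPl : P.length = ℓ := by rw [hPlen, hxd]
  have hPgeo : P.length = G.dist x (γ • x) := hPlen
  -- getVert values of P lie in S
  have hPgS : ∀ i, P.getVert i ∈ S := by
    intro i
    rcases Nat.le_total i P.length with h | h
    · exact hPsupp _ (SimpleGraph.Walk.mem_support_iff_exists_getVert.mpr ⟨i, rfl, h⟩)
    · rw [P.getVert_of_length_le h]
      exact hSinv γ x hxS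
  -- the Serre non-backtracking condition
  have hserre : γ • (P.getVert 1) ≠ P.getVert (ℓ - 1) := by
    intro heq
    rcases Nat.lt_or_ge ℓ 2 with h2 | h2
    · -- ℓ = 1 : inversion
      have hl1 : ℓ = 1 := by omega
      have hg1 : P.getVert 1 = γ • x := by
        rw [show (1 : ℕ) = P.length by omega]
        exact P.getVert_length
      have hg0 : P.getVert (ℓ - 1) = x := by
        rw [hl1]; exact P.getVert_zero
      rw [hg1, hg0] at heq
      have hadjx : G.Adj x (γ • x) := by
        apply SimpleGraph.dist_eq_one_iff_adj.mp
        rw [hxd, hl1]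
      exact hγ.2 ⟨x, γ • x, hadjx, rfl, heq⟩
    · -- ℓ ≥ 2 : displacement drops
      have hy : P.getVert 1 ∈ S := hPgS 1
      have hd : G.dist (P.getVert 1) (γ • P.getVert 1) = ℓ - 2 := by
        rw [heq]
        have := geo_getVert_dist hc P hPgeo (by omega : 1 ≤ ℓ - 1) (by omega : ℓ - 1 ≤ P.length)
        rw [this]; omega
      have := hmin _ hy
      omega
  -- the translation ray
  set r : ℕ → V := fun n => γ ^ (n / ℓ) • P.getVert (n % ℓ) with hrdef
  have rP : ∀ q s : ℕ, s ≤ ℓ → r (ℓ * q + s) = γ ^ q • P.getVert s := by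
    intro q s hs
    rcases Nat.lt_or_ge s ℓ with h | h
    · have h1 : (ℓ * q + s) / ℓ = q := by
        rw [Nat.mul_add_div hlpos, Nat.div_eq_of_lt h]
        omega
      have h2 : (ℓ * q + s) % ℓ = s := by
        rw [Nat.mul_add_mod, Nat.mod_eq_of_lt h]
      rw [hrdef]; simp only [h1, h2]
    · have hsl : s = ℓ := by omega
      rw [hsl]
      have e1 : ℓ * q + ℓ = ℓ * (q + 1) + 0 := by ring
      have h1 : (ℓ * (q+1) + 0) / ℓ = q + 1 := by
        rw [Nat.mul_add_div hlpos, Nat.div_eq_of_lt hlpos]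
      have h2 : (ℓ * (q+1) + 0) % ℓ = 0 := by
        rw [Nat.mul_add_mod, Nat.mod_eq_of_lt hlpos]
      rw [e1, hrdef]; simp only [h1, h2]
      rw [P.getVert_zero, ← hPl, P.getVert_length, pow_succ, mul_smul]
  have hadjr : ∀ n, G.Adj (r n) (r (n + 1)) := by
    intro n
    have hs : n % ℓ < ℓ := Nat.mod_lt _ hlpos
    have e0 : n = ℓ * (n / ℓ) + n % ℓ := (Nat.div_add_mod n ℓ).symm
    rw [show n + 1 = ℓ * (n / ℓ) + (n % ℓ + 1) by omega]
    conv_lhs => rw [e0]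
    rw [rP _ _ hs.le, rP _ _ (by omega)]
    exact (hact (γ ^ (n / ℓ)) _ _).mp (P.adj_getVert_succ (by omega))
  have hnbr : ∀ n, r (n + 2) ≠ r n := by
    intro n heq
    have hs : n % ℓ < ℓ := Nat.mod_lt _ hlpos
    have e0 : n = ℓ * (n / ℓ) + n % ℓ := (Nat.div_add_mod n ℓ).symm
    have hmul : ℓ * (n / ℓ + 1) = ℓ * (n / ℓ) + ℓ := by ring
    rcases Nat.lt_or_ge (n % ℓ + 2) (ℓ + 1) with h | h
    · -- within one block
      rw [show n + 2 = ℓ * (n / ℓ) + (n % ℓ + 2) by omega] at heq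
      conv_rhs at heq => rw [e0]
      rw [rP _ _ (by omega), rP _ _ hs.le] at heq
      have heq' : P.getVert (n % ℓ + 2) = P.getVert (n % ℓ) := MulAction.injective _ heq
      have hdd := geo_getVert_dist hc P hPgeo (by omega : n % ℓ ≤ n % ℓ + 2)
        (by omega : n % ℓ + 2 ≤ P.length)
      rw [heq', SimpleGraph.dist_self] at hdd
      omega
    · -- block boundary : n % ℓ = ℓ - 1
      have hsl : n % ℓ = ℓ - 1 := by omega
      have e2 : n + 2 = ℓ * (n / ℓ + 1) + 1 := by rw [hmul]; omega
      rw [e2] at heq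
      conv_rhs at heq => rw [e0]
      rw [rP _ _ (by omega : 1 ≤ ℓ), rP _ _ hs.le, hsl] at heq
      rw [pow_succ, mul_smul] at heq
      exact hserre (MulAction.injective (γ ^ (n / ℓ)) heq)
  have hray : IsRay G r := tree_noBacktrack_isRay hT r hadjr hnbr
  have hrS : ∀ n, r n ∈ S := by
    intro n
    have e0 : n = ℓ * (n / ℓ) + n % ℓ := (Nat.div_add_mod n ℓ).symm
    rw [e0, rP _ _ (Nat.mod_lt _ hlpos).le]
    exact hSinv _ _ (hPgS _)
  -- the closed invariant boundary set
  set C : Set (Boundary G) :=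
    {ξ | ∀ u v : V, G.Adj u v → ξ ∈ Shadow G u v → ∃ s ∈ S, G.dist v s < G.dist u s}
    with hCdef
  have hCclosed : IsClosed C := by
    rw [← isOpen_compl_iff]
    have hCc : Cᶜ = ⋃ (u : V) (v : V)
        (_ : G.Adj u v ∧ ∀ s ∈ S, G.dist u s ≤ G.dist v s), Shadow G u v := by
      ext ξ
      simp only [hCdef, Set.mem_compl_iff, Set.mem_setOf_eq, Set.mem_iUnion]
      constructor
      · intro h
        push_neg at h
        obtain ⟨u, v, hadj, hsh, hns⟩ := h
        exact ⟨u, v, ⟨hadj, hns⟩, hsh⟩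
      · rintro ⟨u, v, ⟨hadj, hns⟩, hsh⟩
        intro hall
        obtain ⟨s, hsS, hslt⟩ := hall u v hadj hsh
        exact absurd hslt (not_lt.mpr (hns s hsS))
    rw [hCc]
    exact isOpen_iUnion fun u => isOpen_iUnion fun v => isOpen_iUnion fun h =>
      shadow_isOpen h.1
  have hCinv : ∀ δ : Γ, ∀ ξ ∈ C, Boundary.smul hact δ ξ ∈ C := by
    intro δ ξ hξ
    obtain ⟨rr, rfl⟩ := Quot.exists_rep ξ
    intro u v hadj hsh
    obtain ⟨r', hmk, hev⟩ := hsh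
    have hcof : Cofinal r'.1 (raySmul hact δ rr).1 := boundary_mk_eq_iff.mp hmk
    obtain ⟨a, b, hab⟩ := hcof
    have hev' : ∀ᶠ n in Filter.atTop,
        G.dist v (r'.1 (n + b)) < G.dist u (r'.1 (n + b)) := ev_shift_up hev
    have hev2 : ∀ᶠ n in Filter.atTop,
        G.dist (δ⁻¹ • v) (rr.1 n) < G.dist (δ⁻¹ • u) (rr.1 n) := by
      apply ev_shift_down (a := a)
      filter_upwards [hab, hev'] with n h1 h2
      have h1' : δ • rr.1 (n + a) = r'.1 (n + b) := h1
      rw [← h1'] at h2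
      have e1 : G.dist v (δ • rr.1 (n + a)) = G.dist (δ⁻¹ • v) (rr.1 (n + a)) := by
        rw [← dist_smul_eq hact δ⁻¹, inv_smul_smul]
      have e2 : G.dist u (δ • rr.1 (n + a)) = G.dist (δ⁻¹ • u) (rr.1 (n + a)) := by
        rw [← dist_smul_eq hact δ⁻¹, inv_smul_smul]
      rw [e1, e2] at h2
      exact h2
    have hadj' : G.Adj (δ⁻¹ • u) (δ⁻¹ • v) := (hact δ⁻¹ u v).mp hadj
    have hshr : Boundary.mk G rr ∈ Shadow G (δ⁻¹ • u) (δ⁻¹ • v) := ⟨rr, rfl, hev2⟩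
    obtain ⟨s, hsS, hslt⟩ := hξ (δ⁻¹ • u) (δ⁻¹ • v) hadj' hshr
    refine ⟨δ • s, hSinv δ s hsS, ?_⟩
    have e3 : G.dist v (δ • s) = G.dist (δ⁻¹ • v) s := by
      rw [← dist_smul_eq hact δ⁻¹, inv_smul_smul]
    have e4 : G.dist u (δ • s) = G.dist (δ⁻¹ • u) s := by
      rw [← dist_smul_eq hact δ⁻¹, inv_smul_smul]
    rw [e3, e4]
    exact hslt
  have hCne : Boundary.mk G ⟨r, hray⟩ ∈ C := by
    intro u v hadj hsh
    have hev := ray_mem_shadow hsh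
    obtain ⟨n, hn⟩ := hev.exists
    exact ⟨r n, hrS n, hn⟩
  have hCuniv : C = Set.univ := by
    rcases hbmin C hCclosed hCinv with h | h
    · exact absurd (h ▸ hCne) (Set.notMem_empty _)
    · exact h
  -- conclude : S is everything
  apply Set.eq_univ_iff_forall.mpr
  intro w
  by_contra hw
  obtain ⟨P2, hP2path, hP2geo⟩ := exists_geo_path hc s₀ w
  set K : Set ℕ := {n | P2.getVert n ∉ S} with hKdef
  have hKne : K.Nonempty := ⟨P2.length, by rw [hKdef, Set.mem_setOf_eq, P2.getVert_length]; exact hw⟩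
  obtain ⟨k, hkdef⟩ : ∃ k : ℕ, k = sInf K := ⟨_, rfl⟩
  have hkK : P2.getVert k ∉ S := by rw [hkdef]; exact Nat.sInf_mem hKne
  have hk1 : 1 ≤ k := by
    rcases Nat.eq_zero_or_pos k with h0 | h
    · exfalso
      apply hkK
      rw [h0, P2.getVert_zero]
      exact hs₀
    · exact h
  have hkle : k ≤ P2.length := by
    rw [hkdef]
    exact Nat.sInf_le (by rw [hKdef, Set.mem_setOf_eq, P2.getVert_length]; exact hw)
  set u : V := P2.getVert (k - 1) with hudef
  set v : V := P2.getVert k with hvdef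
  have huS : u ∈ S := by
    by_contra hus
    exact Nat.notMem_of_lt_sInf (by rw [← hkdef]; omega : k - 1 < sInf K) hus
  have huv : G.Adj u v := by
    have := P2.adj_getVert_succ (by omega : k - 1 < P2.length)
    rwa [show k - 1 + 1 = k by omega] at this
  -- the half-tree at v contains no point of S
  have hHS : ∀ t ∈ S, ¬ (G.dist v t < G.dist u t) := by
    intro t ht hlt
    obtain ⟨Q, hQpath, hQlen, hQsupp⟩ := path_in_S hT hSconn huS ht
    by_cases hvQ : v ∈ Q.support
    · exact hkK (hQsupp v hvQ)
    · have hcons : (SimpleGraph.Walk.cons huv.symm Q).IsPath := by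
        rw [SimpleGraph.Walk.cons_isPath_iff]
        exact ⟨hQpath, hvQ⟩
      have := tree_path_length hT _ hcons
      rw [SimpleGraph.Walk.length_cons, hQlen] at this
      omega
  -- build a ray from v avoiding u
  have hpick : ∀ a b : V, ∃ w', G.Adj a w' ∧ w' ≠ b := pick_neighbor hc hdeg
  set pickf : V → V → V := fun a b => (hpick a b).choose with hpickdef
  have hpick1 : ∀ a b, G.Adj a (pickf a b) := fun a b => (hpick a b).choose_spec.1
  have hpick2 : ∀ a b, pickf a b ≠ b := fun a b => (hpick a b).choose_spec.2
  set f : ℕ → V × V := fun n => Nat.rec (u, v) (fun _ pr => (pr.2, pickf pr.2 pr.1)) n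
    with hfdef
  set r2 : ℕ → V := fun n => (f n).2 with hr2def
  have hf0 : f 0 = (u, v) := rfl
  have hfs : ∀ n, f (n + 1) = ((f n).2, pickf (f n).2 (f n).1) := fun n => rfl
  have hr20 : r2 0 = v := rfl
  have hf1 : ∀ n, (f (n + 1)).1 = r2 n := fun n => rfl
  have hr2s : ∀ n, r2 (n + 1) = pickf (r2 n) ((f n).1) := fun n => rfl
  have hadj2 : ∀ n, G.Adj (r2 n) (r2 (n + 1)) := by
    intro n
    rw [hr2s]
    exact hpick1 _ _
  have hnb2 : ∀ n, r2 (n + 2) ≠ r2 n := by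
    intro n
    rw [hr2s (n + 1), hf1 n]
    exact hpick2 _ _
  have hr21 : r2 1 ≠ u := by
    have e : r2 1 = pickf v u := rfl
    rw [e]
    exact hpick2 v u
  set rt : ℕ → V := fun n => Nat.rec u (fun m _ => r2 m) n with hrtdef
  have hrt0 : rt 0 = u := rfl
  have hrts : ∀ n, rt (n + 1) = r2 n := fun n => rfl
  have hadjt : ∀ n, G.Adj (rt n) (rt (n + 1)) := by
    intro n
    match n with
    | 0 => show G.Adj u v; exact huv
    | (m + 1) => show G.Adj (r2 m) (r2 (m + 1)); exact hadj2 m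
  have hnbt : ∀ n, rt (n + 2) ≠ rt n := by
    intro n
    match n with
    | 0 => show r2 1 ≠ u; exact hr21
    | (m + 1) => show r2 (m + 2) ≠ r2 m; exact hnb2 m
  have hray2 : IsRay G r2 := tree_noBacktrack_isRay hT r2 hadj2 hnb2
  have hrayt : IsRay G rt := tree_noBacktrack_isRay hT rt hadjt hnbt
  have hdist2 : ∀ n, G.dist v (r2 n) = n := by
    intro n
    have := hray2 0 n
    rw [hr20] at this
    rw [this]
    omega
  have hdistt : ∀ n, G.dist u (r2 n) = n + 1 := by
    intro n
    have := hrayt 0 (n + 1)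
    rw [hrt0, hrts] at this
    rw [this]
    omega
  have hshadow : Boundary.mk G ⟨r2, hray2⟩ ∈ Shadow G u v := by
    refine ⟨⟨r2, hray2⟩, rfl, Filter.Eventually.of_forall fun n => ?_⟩
    rw [hdist2, hdistt]
    omega
  have hmem : Boundary.mk G ⟨r2, hray2⟩ ∈ C := by rw [hCuniv]; trivial
  obtain ⟨s, hsS, hslt⟩ := hmem u v huv hshadow
  exact hHS s hsS hslt

end Statements
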